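/- arXiv:1501.00265 — 8 statements merged into one kernel-verified Lean document; each statement's English description precedes it below -/
import Mathlib

section
/- Let f : Z_k^n → Z_k be a function of k-valued logic with at least one essential variable (k ≥ 2). Then f has at least one strongly essential variable, i.e., there exists an essential variable x_i and a constant c ∈ Z_k such that the set of essential variables of the subfunction f(x_i = c) equals Ess(f) \ {x_i}. -/
open scoped Classical

namespace Paper

/-- A `k`-valued function of `n` variables. -/
abbrev Fn (k n : ℕ) : Type := (Fin n → ZMod k) → ZMod k

/-- `x i` is an essential variable of `f`. -/
def Essential {k n : ℕ} (f : Fn k n) (i : Fin n) : Prop :=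
  ∃ (a : Fin n → ZMod k) (b : ZMod k), f (Function.update a i b) ≠ f a

/-- The set of essential variables of `f`. -/
def Ess {k n : ℕ} (f : Fn k n) : Set (Fin n) := {i | Essential f i}

/-- The subfunction `f(x i = c)`. -/
def substVar {k n : ℕ} (f : Fn k n) (i : Fin n) (c : ZMod k) : Fn k n :=
  fun a => f (Function.update a i c)

/-- Substitute the constants `c` for all variables in the set `J`. -/
noncomputable def substSet {k n : ℕ} (f : Fn k n) (J : Set (Fin n)) (c : Fin n → ZMod k) : Fn k n :=
  fun a => f (fun i => if i ∈ J then c i else a i)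

/-- `g` is a simple subfunction of `f`: obtained by substituting a constant
for an essential variable of `f`. -/
def SimpleSub {k n : ℕ} (g f : Fn k n) : Prop :=
  ∃ i ∈ Ess f, ∃ c : ZMod k, g = substVar f i c

/-- `Sub f` is the set of all subfunctions of `f` (reflexive-transitive closure of
the simple subfunction relation). -/
def Sub {k n : ℕ} (f : Fn k n) : Set (Fn k n) :=
  {g | Relation.ReflTransGen (fun u v => SimpleSub v u) f g}

/-- `M` is a separable set of variables in `f`: `M = Ess g` for some subfunction `g`. -/
def Separable {k n : ℕ} (f : Fn k n) (M : Set (Fin n)) : Prop :=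
  ∃ g ∈ Sub f, Ess g = M

/-- Separability phrased via simultaneous substitution for a set of variables. -/
def SeparableS {k n : ℕ} (f : Fn k n) (M : Set (Fin n)) : Prop :=
  ∃ (J : Set (Fin n)) (c : Fin n → ZMod k), Ess (substSet f J c) = M

/-- `J` is a set of essential variables disjoint from `M` such that every assignment of
constants to `J` destroys some variable of `M`. -/
def Kills {k n : ℕ} (f : Fn k n) (M J : Set (Fin n)) : Prop :=
  J ⊆ Ess f ∧ J ∩ M = ∅ ∧ ∀ c : Fin n → ZMod k, ¬ M ⊆ Ess (substSet f J c)

/-- `Dis f M` : the family of all distributive sets of `M` in `f`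
(inclusion-minimal sets `J` with `Kills f M J`). -/
def Dis {k n : ℕ} (f : Fn k n) (M : Set (Fin n)) : Set (Set (Fin n)) :=
  {J | Kills f M J ∧ ∀ J' ⊆ J, Kills f M J' → J' = J}

/-- `β` is an s-system of the family `F`. -/
def IsSSystem {n : ℕ} (F : Set (Set (Fin n))) (β : Set (Fin n)) : Prop :=
  (∀ P ∈ F, (β ∩ P).Nonempty) ∧ ∀ x ∈ β, ∃ P ∈ F, P ∩ β = {x}

/-- `x i` is a strongly essential variable of `f`. -/
def StronglyEssential {k n : ℕ} (f : Fn k n) (i : Fin n) : Prop :=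
  i ∈ Ess f ∧ ∃ c : ZMod k, Ess (substVar f i c) = Ess f \ {i}

/-- The number of subfunctions of `f` having exactly `m` essential variables. -/
noncomputable def subCount {k n : ℕ} (f : Fn k n) (m : ℕ) : ℕ :=
  Set.ncard {g ∈ Sub f | (Ess g).ncard = m}

/-- `IsImp f l c` : the list `l` of (variable, constant) substitutions together with the
final value `c` is an implementation of `f`, i.e. a root-to-leaf path in a reduced
ordered decision diagram of `f`: each substituted variable is essential in the current
subfunction, and the final subfunction is the constant `c`. -/
inductive IsImp {k n : ℕ} : Fn k n → List (Fin n × ZMod k) → ZMod k → Prop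
  | const (f : Fn k n) (c : ZMod k) : (∀ a, f a = c) → IsImp f [] c
  | step (f : Fn k n) (i : Fin n) (a : ZMod k) (l : List (Fin n × ZMod k)) (c : ZMod k) :
      i ∈ Ess f → IsImp (substVar f i a) l c → IsImp f ((i, a) :: l) c

/-- The number of implementations of `f`. -/
noncomputable def imp {k n : ℕ} (f : Fn k n) : ℕ :=
  Set.ncard {p : List (Fin n × ZMod k) × ZMod k | IsImp f p.1 p.2}

end Paper

open Paper

/-- `i` is not essential in `f(x i = c)`. -/
lemma aux_not_ess_self {k n : ℕ} (f : Fn k n) (i : Fin n) (c : ZMod k) :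
    i ∉ Ess (substVar f i c) := by
  rintro ⟨a, b, h⟩
  exact h (by simp [substVar, Function.update_idem])

/-- Essential variables of a subfunction are essential in the function, and differ from `i`. -/
lemma aux_ess_subst_subset {k n : ℕ} (f : Fn k n) (i : Fin n) (c : ZMod k) (s : Fin n)
    (hs : s ∈ Ess (substVar f i c)) : s ∈ Ess f ∧ s ≠ i := by
  have hsi : s ≠ i := by
    rintro rfl
    exact aux_not_ess_self f s c hs
  obtain ⟨a, b, h⟩ := hs
  refine ⟨⟨Function.update a i c, b, ?_⟩, hsi⟩
  simpa [substVar, Function.update_comm hsi] using h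

/-- Substituting a non-essential variable does not change the function. -/
lemma aux_subst_not_ess {k n : ℕ} (f : Fn k n) (j : Fin n) (e : ZMod k)
    (hj : j ∉ Ess f) : substVar f j e = f := by
  funext a
  by_contra h
  exact hj ⟨a, e, h⟩

/-- Substitutions for distinct variables commute. -/
lemma aux_subst_comm {k n : ℕ} (f : Fn k n) (i j : Fin n) (c e : ZMod k) (hij : i ≠ j) :
    substVar (substVar f i c) j e = substVar (substVar f j e) i c := by
  funext a
  simp [substVar, Function.update_comm hij]

/-- If `s` is essential in `f` and `s ≠ i`, some substitution for `i` keeps `s` essential. -/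
lemma aux_exists_c {k n : ℕ} (f : Fn k n) (i s : Fin n) (hs : s ∈ Ess f) (hsi : s ≠ i) :
    ∃ c : ZMod k, s ∈ Ess (substVar f i c) := by
  obtain ⟨a, b, h⟩ := hs
  refine ⟨a i, a, b, ?_⟩
  have h1 : Function.update (Function.update a s b) i (a i)
      = Function.update a s b := by
    have : (Function.update a s b) i = a i := Function.update_of_ne (Ne.symm hsi) _ _
    conv_lhs => rw [← this]
    exact Function.update_eq_self i _
  have h2 : Function.update a i (a i) = a := Function.update_eq_self i a
  simpa [substVar, h1, h2] using h


open Paper in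
/-- every `k`-valued function (`k ≥ 2`) with at least one essential variable
has a strongly essential variable. -/
theorem exists_strongly_essential {k n : ℕ} (hk : 2 ≤ k) (f : Fn k n)
    (hf : (Ess f).Nonempty) :
    ∃ i ∈ Ess f, ∃ c : ZMod k, Ess (substVar f i c) = Ess f \ {i} := by
  classical
  -- T: set of achievable cardinalities of Ess of simple subfunctions
  set T : Set ℕ := {m | ∃ i ∈ Ess f, ∃ c : ZMod k, (Ess (substVar f i c)).ncard = m} with hT
  obtain ⟨i0, hi0⟩ := hf
  have hTne : T.Nonempty := ⟨_, i0, hi0, (0 : ZMod k), rfl⟩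
  have hTbdd : BddAbove T := by
    refine ⟨(Set.univ : Set (Fin n)).ncard, ?_⟩
    rintro m ⟨i, hi, c, rfl⟩
    exact Set.ncard_le_ncard (Set.subset_univ _) (Set.toFinite _)
  have hmem := Nat.sSup_mem hTne hTbdd
  obtain ⟨i, hi, c, hic⟩ := hmem
  refine ⟨i, hi, c, ?_⟩
  apply Set.eq_of_subset_of_subset
  · intro s hs
    obtain ⟨hs1, hs2⟩ := aux_ess_subst_subset f i c s hs
    exact ⟨hs1, hs2⟩
  · rintro j ⟨hjf, hji⟩
    simp only [Set.mem_singleton_iff] at hji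
    by_contra hjE
    obtain ⟨e, hie⟩ := aux_exists_c f j i hi (fun h => hji h.symm)
    -- every element of E := Ess (substVar f i c) is in F := Ess (substVar f j e)
    have hsub : insert i (Ess (substVar f i c)) ⊆ Ess (substVar f j e) := by
      intro s hs
      rcases Set.mem_insert_iff.mp hs with rfl | hsE
      · exact hie
      · have hkey : substVar (substVar f j e) i c = substVar f i c := by
          rw [aux_subst_comm f j i e c (fun h => hji h)]
          exact aux_subst_not_ess (substVar f i c) j e hjE
        have : s ∈ Ess (substVar (substVar f j e) i c) := hkey ▸ hsE
        exact (aux_ess_subst_subset _ i c s this).1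
    have hiE : i ∉ Ess (substVar f i c) := aux_not_ess_self f i c
    have h1 : (Ess (substVar f i c)).ncard + 1 ≤ (Ess (substVar f j e)).ncard := by
      have := Set.ncard_le_ncard hsub (Set.toFinite _)
      rwa [Set.ncard_insert_of_notMem hiE (Set.toFinite _)] at this
    have h2 : (Ess (substVar f j e)).ncard ≤ sSup T :=
      le_csSup hTbdd ⟨j, hjf, e, rfl⟩
    omega
end

section
/- Let f : Z_k^n → Z_k have at least two essential variables. Then f has at least two strongly essential variables. -/
open scoped Classical

section SEProof

open Function

variable {k n : ℕ}

/-- Essential variables, for an arbitrary codomain. -/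
def EssV {V : Type*} (G : (Fin n → ZMod k) → V) : Set (Fin n) :=
  {i | ∃ a b, G (Function.update a i b) ≠ G a}

lemma update_self_of_eq {α : Type*} [DecidableEq α] {β : Type*} {a : α → β} {i : α} {d : β}
    (h : a i = d) : Function.update a i d = a := by
  subst h; exact Function.update_eq_self i a

lemma essV_slice_subset {V : Type*} (G : (Fin n → ZMod k) → V) (i : Fin n) (c : ZMod k) :
    EssV (fun x => G (Function.update x i c)) ⊆ EssV G \ {i} := by
  rintro z ⟨a, b, hab⟩
  have hab' : G (Function.update (Function.update a z b) i c) ≠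
      G (Function.update a i c) := hab
  have hzi : z ≠ i := by
    rintro rfl
    exact hab' (by rw [Function.update_idem])
  refine ⟨⟨Function.update a i c, b, ?_⟩, hzi⟩
  rwa [Function.update_comm hzi] at hab'

lemma essV_bundle {V : Type*} (G : (Fin n → ZMod k) → V) (i : Fin n) :
    EssV (fun x => fun c : ZMod k => G (Function.update x i c)) = EssV G \ {i} := by
  ext z
  constructor
  · rintro ⟨a, b, hab⟩
    have hab' : (fun c : ZMod k => G (Function.update (Function.update a z b) i c)) ≠
        (fun c : ZMod k => G (Function.update a i c)) := hab
    have hzi : z ≠ i := by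
      rintro rfl
      exact hab' (by funext c; rw [Function.update_idem])
    obtain ⟨c, hc⟩ := Function.ne_iff.mp hab'
    refine ⟨⟨Function.update a i c, b, ?_⟩, hzi⟩
    rwa [Function.update_comm hzi] at hc
  · rintro ⟨⟨a, b, hab⟩, hzi⟩
    have hzi' : z ≠ i := hzi
    refine ⟨a, b, Function.ne_iff.mpr ⟨a i, ?_⟩⟩
    show G (Function.update (Function.update a z b) i (a i)) ≠
      G (Function.update a i (a i))
    have h1 : Function.update (Function.update a z b) i (a i) = Function.update a z b := by
      apply update_self_of_eq
      rw [Function.update_of_ne (Ne.symm hzi') b a]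
    have h2 : Function.update a i (a i) = a := Function.update_eq_self i a
    rw [h1, h2]
    exact hab

/-- connectivity of the cube under single-coordinate updates -/
lemma cube_reach (U : Set (Fin n → ZMod k))
    (hU : ∀ a ∈ U, ∀ (i : Fin n) (c : ZMod k), Function.update a i c ∈ U) :
    ∀ (b : Fin n → ZMod k), ∀ a ∈ U, b ∈ U := by
  intro b
  suffices H : ∀ (m : ℕ) (a : Fin n → ZMod k), a ∈ U →
      (Finset.univ.filter (fun i => a i ≠ b i)).card = m → b ∈ U by
    intro a ha
    exact H _ a ha rfl
  intro m
  induction m using Nat.strong_induction_on with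
  | _ m IH =>
    intro a ha hcard
    by_cases hab : a = b
    · exact hab ▸ ha
    · have : ∃ i, a i ≠ b i := by
        by_contra h
        push_neg at h
        exact hab (funext h)
      obtain ⟨i, hi⟩ := this
      have himem : i ∈ Finset.univ.filter (fun j => a j ≠ b j) := by
        simp [hi]
      set a' := Function.update a i (b i) with ha'def
      have ha' : a' ∈ U := hU a ha i (b i)
      have hsub : (Finset.univ.filter (fun j => a' j ≠ b j)) ⊆
          (Finset.univ.filter (fun j => a j ≠ b j)).erase i := by
        intro j hj
        simp only [Finset.mem_filter, Finset.mem_univ, true_and] at hj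
        have hji : j ≠ i := by
          rintro rfl
          exact hj (by rw [ha'def, Function.update_self])
        rw [ha'def, Function.update_of_ne hji] at hj
        exact Finset.mem_erase.mpr ⟨hji, by simp [hj]⟩
      have hlt : (Finset.univ.filter (fun j => a' j ≠ b j)).card < m := by
        calc (Finset.univ.filter (fun j => a' j ≠ b j)).card
            ≤ ((Finset.univ.filter (fun j => a j ≠ b j)).erase i).card :=
              Finset.card_le_card hsub
          _ < (Finset.univ.filter (fun j => a j ≠ b j)).card :=
              Finset.card_erase_lt_of_mem himem
          _ = m := hcard
      exact IH _ hlt a' ha' rfl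

/-- Key lemma: if `G` has at least one essential variable and `U` is a nonempty
`G`-saturated set, then some essential variable `y` has a substitution `y = d`
whose slice meets `U` and which preserves all the other essential variables. -/
theorem key_lemma : ∀ (m : ℕ) (V : Type) (G : (Fin n → ZMod k) → V)
    (U : Set (Fin n → ZMod k)),
    (EssV G).ncard = m → 1 ≤ m → U.Nonempty →
    (∀ a ∈ U, ∀ b, G b = G a → b ∈ U) →
    ∃ y ∈ EssV G, ∃ d : ZMod k, ∃ u ∈ U, u y = d ∧
      EssV (fun x => G (Function.update x y d)) = EssV G \ {y} := by
  intro m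
  induction m using Nat.strong_induction_on with
  | _ m IH =>
    intro V G U hcard hm hUne hsat
    obtain ⟨a₀, ha₀⟩ := hUne
    rcases Nat.lt_or_ge m 2 with hm2 | hm2
    · -- m = 1
      have hm1 : m = 1 := by omega
      obtain ⟨y, hy⟩ := Set.ncard_eq_one.mp (hm1 ▸ hcard)
      refine ⟨y, by rw [hy]; exact rfl, a₀ y, a₀, ha₀, rfl, ?_⟩
      have h1 : EssV G \ {y} = (∅ : Set (Fin n)) := by
        rw [hy]; simp
      rw [h1, ← Set.subset_empty_iff]
      intro z hz
      have h2 := essV_slice_subset G y (a₀ y) hz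
      rw [h1] at h2
      exact h2
    · -- m ≥ 2
      have hline : ∃ x' ∈ EssV G, ∃ a ∈ U, ∃ c, G (Function.update a x' c) ≠ G a := by
        by_contra hno
        push_neg at hno
        have hstep : ∀ a ∈ U, ∀ (i : Fin n) (c : ZMod k), Function.update a i c ∈ U := by
          intro a ha i c
          by_cases hi : i ∈ EssV G
          · exact hsat a ha _ (hno i hi a ha c)
          · have hconst : ∀ b, G (Function.update a i b) = G a := by
              intro b
              by_contra hb
              exact hi ⟨a, b, hb⟩
            exact hsat a ha _ (hconst c)
        have hEne : (EssV G).Nonempty := by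
          apply Set.nonempty_of_ncard_ne_zero
          omega
        obtain ⟨z, A, b, hAb⟩ := hEne
        have hA : A ∈ U := cube_reach U hstep A a₀ ha₀
        exact hAb (hno z ⟨A, b, hAb⟩ A hA b)
      obtain ⟨x', hx', a, ha, c, hc⟩ := hline
      set Gb : (Fin n → ZMod k) → (ZMod k → V) :=
        fun x => fun c' => G (Function.update x x' c') with hGbdef
      have hEb : EssV Gb = EssV G \ {x'} := essV_bundle G x'
      have hcard' : (EssV Gb).ncard = m - 1 := by
        rw [hEb, Set.ncard_diff_singleton_of_mem hx', hcard]
      set Us : Set (Fin n → ZMod k) :=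
        {p | (∃ c', Function.update p x' c' ∈ U) ∧
             ∃ c₁ c₂, G (Function.update p x' c₁) ≠ G (Function.update p x' c₂)} with hUsdef
      have haUs : a ∈ Us := by
        refine ⟨⟨a x', by rwa [Function.update_eq_self]⟩, c, a x', ?_⟩
        rwa [Function.update_eq_self]
      have hsat' : ∀ p ∈ Us, ∀ q, Gb q = Gb p → q ∈ Us := by
        rintro p ⟨⟨c', hc'⟩, c₁, c₂, h12⟩ q hq
        have hqc : ∀ c'', G (Function.update q x' c'') = G (Function.update p x' c'') :=
          fun c'' => congrFun hq c''
        exact ⟨⟨c', hsat _ hc' _ (hqc c')⟩, c₁, c₂, by rw [hqc c₁, hqc c₂]; exact h12⟩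
      obtain ⟨y, hyGb, d, us, husUs, husy, hsl⟩ :=
        IH (m - 1) (by omega) (ZMod k → V) Gb Us hcard' (by omega) ⟨a, haUs⟩ hsat'
      have hyGb' : y ∈ EssV G \ {x'} := hEb ▸ hyGb
      have hyG : y ∈ EssV G := hyGb'.1
      have hyx : y ≠ x' := hyGb'.2
      obtain ⟨⟨c', hc'⟩, cd1, cd2, hdisc⟩ := husUs
      refine ⟨y, hyG, d, Function.update us x' c', hc', ?_, ?_⟩
      · rw [Function.update_of_ne hyx]; exact husy
      · apply Set.Subset.antisymm (essV_slice_subset G y d)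
        rintro z ⟨hzG, hzy⟩
        have hzy' : z ≠ y := hzy
        by_cases hzx : z = x'
        · subst hzx
          refine ⟨Function.update us z cd2, cd1, ?_⟩
          show G (Function.update (Function.update (Function.update us z cd2) z cd1) y d) ≠
            G (Function.update (Function.update us z cd2) y d)
          have e1 : Function.update (Function.update us z cd2) z cd1
              = Function.update us z cd1 := by rw [Function.update_idem]
          have e2 : ∀ cc : ZMod k, Function.update (Function.update us z cc) y d
              = Function.update us z cc := by
            intro cc
            apply update_self_of_eq
            rw [Function.update_of_ne hyx cc us]
            exact husy
          rw [e1, e2, e2]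
          exact hdisc
        · have hzGb : z ∈ EssV (fun x => Gb (Function.update x y d)) := by
            rw [hsl, hEb]
            exact ⟨⟨hzG, hzx⟩, hzy⟩
          obtain ⟨A, b', hA⟩ := hzGb
          obtain ⟨cc, hcc⟩ := Function.ne_iff.mp hA
          have hcc' : G (Function.update (Function.update (Function.update A z b') y d) x' cc)
              ≠ G (Function.update (Function.update A y d) x' cc) := hcc
          refine ⟨Function.update A x' cc, b', ?_⟩
          show G (Function.update (Function.update (Function.update A x' cc) z b') y d) ≠
            G (Function.update (Function.update A x' cc) y d)
          have e1 : Function.update (Function.update A x' cc) z b'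
              = Function.update (Function.update A z b') x' cc :=
            Function.update_comm (Ne.symm hzx) cc b' A
          have e2 : Function.update (Function.update (Function.update A z b') x' cc) y d
              = Function.update (Function.update (Function.update A z b') y d) x' cc :=
            Function.update_comm (Ne.symm hyx) cc d (Function.update A z b')
          have e3 : Function.update (Function.update A x' cc) y d
              = Function.update (Function.update A y d) x' cc :=
            Function.update_comm (Ne.symm hyx) cc d A
          rw [e1, e2, e3]
          exact hcc'

end SEProof


open Paper in
lemma step_lemma {k n : ℕ} (f : Fn k n) (hf : 2 ≤ (Ess f).ncard) {y : Fin n}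
    (hy : y ∈ Ess f) : ∃ y', y' ≠ y ∧ StronglyEssential f y' := by
  have hEssEq : Ess f = EssV f := rfl
  set Gb : (Fin n → ZMod k) → (ZMod k → ZMod k) :=
    fun x => fun c' => f (Function.update x y c') with hGbdef
  have hEb : EssV Gb = EssV f \ {y} := essV_bundle f y
  have hyV : y ∈ EssV f := hy
  have hycard : (EssV Gb).ncard = (EssV f).ncard - 1 := by
    rw [hEb, Set.ncard_diff_singleton_of_mem hyV]
  set U : Set (Fin n → ZMod k) :=
    {p | ∃ c₁ c₂, f (Function.update p y c₁) ≠ f (Function.update p y c₂)} with hUdef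
  have hUne : U.Nonempty := by
    obtain ⟨a, b, hab⟩ := hy
    exact ⟨a, b, a y, by rwa [Function.update_eq_self]⟩
  have hsatU : ∀ p ∈ U, ∀ q, Gb q = Gb p → q ∈ U := by
    rintro p ⟨c₁, c₂, h12⟩ q hq
    have hqc : ∀ c'', f (Function.update q y c'') = f (Function.update p y c'') :=
      fun c'' => congrFun hq c''
    exact ⟨c₁, c₂, by rw [hqc c₁, hqc c₂]; exact h12⟩
  obtain ⟨y', hy'Gb, d, u, huU, huy', hsl⟩ :=
    key_lemma ((EssV f).ncard - 1) (ZMod k → ZMod k) Gb U hycard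
      (by rw [hEssEq] at hf; omega) hUne hsatU
  have hy'Gb' : y' ∈ EssV f \ {y} := hEb ▸ hy'Gb
  have hy'f : y' ∈ EssV f := hy'Gb'.1
  have hy'y : y' ≠ y := hy'Gb'.2
  refine ⟨y', hy'y, hy'f, d, ?_⟩
  have hEsub : Ess (substVar f y' d) = EssV (fun x => f (Function.update x y' d)) := rfl
  rw [hEsub, hEssEq]
  apply Set.Subset.antisymm (essV_slice_subset f y' d)
  rintro z ⟨hzf, hzy'⟩
  have hzy'' : z ≠ y' := hzy'
  by_cases hzy : z = y
  · subst hzy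
    obtain ⟨c₁, c₂, h12⟩ := huU
    refine ⟨Function.update u z c₂, c₁, ?_⟩
    show f (Function.update (Function.update (Function.update u z c₂) z c₁) y' d) ≠
      f (Function.update (Function.update u z c₂) y' d)
    have e1 : Function.update (Function.update u z c₂) z c₁
        = Function.update u z c₁ := by rw [Function.update_idem]
    have e2 : ∀ cc : ZMod k, Function.update (Function.update u z cc) y' d
        = Function.update u z cc := by
      intro cc
      apply update_self_of_eq
      rw [Function.update_of_ne hy'y cc u]
      exact huy'
    rw [e1, e2, e2]
    exact h12
  · have hzGb : z ∈ EssV (fun x => Gb (Function.update x y' d)) := by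
      rw [hsl, hEb]
      exact ⟨⟨hzf, hzy⟩, hzy'⟩
    obtain ⟨A, b', hA⟩ := hzGb
    obtain ⟨cc, hcc⟩ := Function.ne_iff.mp hA
    have hcc' : f (Function.update (Function.update (Function.update A z b') y' d) y cc)
        ≠ f (Function.update (Function.update A y' d) y cc) := hcc
    refine ⟨Function.update A y cc, b', ?_⟩
    show f (Function.update (Function.update (Function.update A y cc) z b') y' d) ≠
      f (Function.update (Function.update A y cc) y' d)
    have e1 : Function.update (Function.update A y cc) z b'
        = Function.update (Function.update A z b') y cc :=
      Function.update_comm (fun h => hzy h.symm) cc b' A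
    have e2 : Function.update (Function.update (Function.update A z b') y cc) y' d
        = Function.update (Function.update (Function.update A z b') y' d) y cc :=
      Function.update_comm (Ne.symm hy'y) cc d (Function.update A z b')
    have e3 : Function.update (Function.update A y cc) y' d
        = Function.update (Function.update A y' d) y cc :=
      Function.update_comm (Ne.symm hy'y) cc d A
    rw [e1, e2, e3]
    exact hcc'

open Paper in
/-- a function with at least two essential variables has at least two
strongly essential variables. -/
theorem exists_two_strongly_essential {k n : ℕ} (hk : 2 ≤ k) (f : Fn k n)
    (hf : 2 ≤ (Ess f).ncard) :
    ∃ i j : Fin n, i ≠ j ∧ StronglyEssential f i ∧ StronglyEssential f j := by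
  have hne : (Ess f).Nonempty := Set.nonempty_of_ncard_ne_zero (by omega)
  obtain ⟨y₀, hy₀⟩ := hne
  obtain ⟨y₁, hy₁ne, hy₁se⟩ := step_lemma f hf hy₀
  obtain ⟨y₂, hy₂ne, hy₂se⟩ := step_lemma f hf hy₁se.1
  exact ⟨y₁, y₂, Ne.symm hy₂ne, hy₁se, hy₂se⟩
end

section
/- Let M be a non-empty inseparable set of essential variables of f : Z_k^n → Z_k and let β be an s-system of the family Dis(M,f) of distributive sets of M in f. Then M ∪ β is a separable set of f. -/
open scoped Classical

section Aux

open Paper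

/-- If a variable outside `J` is essential after substituting on `J`, it is essential
after substituting on any subset `J' ⊆ J`. -/
lemma essA {k n : ℕ} (f : Fn k n) {J J' : Set (Fin n)} (c : Fin n → ZMod k)
    (hJJ : J' ⊆ J) {i : Fin n} (hiJ : i ∉ J) (hi : i ∈ Ess (substSet f J c)) :
    i ∈ Ess (substSet f J' c) := by
  obtain ⟨a, b, hab⟩ := hi
  have hiJ' : i ∉ J' := fun h => hiJ (hJJ h)
  refine ⟨fun j => if j ∈ J then c j else a j, b, ?_⟩
  have h1 : substSet f J' c (Function.update (fun j => if j ∈ J then c j else a j) i b)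
      = substSet f J c (Function.update a i b) := by
    show f _ = f _
    congr 1
    funext j
    by_cases hj' : j ∈ J'
    · simp [hj', hJJ hj']
    · by_cases hji : j = i
      · subst hji
        simp [hj', hiJ]
      · by_cases hjJ : j ∈ J <;>
          simp [hj', hji, hjJ, Function.update_of_ne hji]
  have h2 : substSet f J' c (fun j => if j ∈ J then c j else a j) = substSet f J c a := by
    show f _ = f _
    congr 1
    funext j
    by_cases hj' : j ∈ J'
    · simp [hj', hJJ hj']
    · by_cases hjJ : j ∈ J <;> simp [hj', hjJ]
  rw [h1, h2]
  exact hab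

lemma substSet_empty {k n : ℕ} (f : Fn k n) (c : Fin n → ZMod k) :
    substSet f (∅ : Set (Fin n)) c = f := by
  funext a
  show f _ = f _
  congr 1
  funext j
  simp

lemma not_ess_of_mem {k n : ℕ} (f : Fn k n) (J : Set (Fin n)) (c : Fin n → ZMod k)
    {i : Fin n} (hi : i ∈ J) : i ∉ Ess (substSet f J c) := by
  rintro ⟨a, b, hab⟩
  apply hab
  show f _ = f _
  congr 1
  funext j
  by_cases hjJ : j ∈ J
  · simp [hjJ]
  · have hji : j ≠ i := fun h => hjJ (h ▸ hi)
    simp [hjJ, Function.update_of_ne hji]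

lemma kills_mono {k n : ℕ} (f : Fn k n) (M : Set (Fin n)) {J' J : Set (Fin n)}
    (hsub : J' ⊆ J) (hJess : J ⊆ Ess f) (hJM : J ∩ M = ∅)
    (h' : Kills f M J') : Kills f M J := by
  refine ⟨hJess, hJM, fun c hc => ?_⟩
  obtain ⟨-, -, hd⟩ := h'
  apply hd c
  intro m hm
  have hmJ : m ∉ J := fun hmJ => by
    have : m ∈ J ∩ M := ⟨hmJ, hm⟩
    rw [hJM] at this
    exact this
  exact essA f c hsub hmJ (hc hm)

lemma exists_dis {k n : ℕ} (f : Fn k n) (M : Set (Fin n)) :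
    ∀ m : ℕ, ∀ J : Set (Fin n), J.ncard ≤ m → Kills f M J →
      ∃ J₀, J₀ ∈ Dis f M ∧ J₀ ⊆ J := by
  intro m
  induction m with
  | zero =>
    intro J hcard hK
    have hJ : J = ∅ := (Set.ncard_eq_zero (Set.toFinite J)).mp (Nat.le_zero.mp hcard)
    exact ⟨J, ⟨hK, fun J' hJ' _ => by
      rw [hJ] at hJ' ⊢
      exact Set.subset_empty_iff.mp hJ'⟩, subset_rfl⟩
  | succ m ih =>
    intro J hcard hK
    by_cases hmin : ∀ J' ⊆ J, Kills f M J' → J' = J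
    · exact ⟨J, ⟨hK, hmin⟩, subset_rfl⟩
    · push_neg at hmin
      obtain ⟨J', hJ'sub, hJ'K, hne⟩ := hmin
      have hlt : J'.ncard < J.ncard :=
        Set.ncard_lt_ncard (ssubset_of_subset_of_ne hJ'sub hne) (Set.toFinite J)
      obtain ⟨J₀, h₀, hsub₀⟩ := ih J' (by omega) hJ'K
      exact ⟨J₀, h₀, hsub₀.trans hJ'sub⟩

end Aux

open Paper in
/-- if `M` is a non-empty inseparable set of essential variables of `f` and
`β` is an s-system of the family of distributive sets of `M`, then `M ∪ β` is separable. -/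
theorem union_s_system_separable {k n : ℕ} (hk : 2 ≤ k) (f : Fn k n)
    (M β : Set (Fin n)) (hM : M ⊆ Ess f) (hMne : M.Nonempty)
    (hins : ¬ SeparableS f M) (hβ : IsSSystem (Dis f M) β) :
    SeparableS f (M ∪ β) := by
  classical
  set N : Set (Fin n) := Ess f \ (M ∪ β) with hN
  have hNess : N ⊆ Ess f := Set.diff_subset
  have hNM : N ∩ M = ∅ := by
    ext i
    simp only [Set.mem_inter_iff, Set.mem_empty_iff_false, iff_false, not_and]
    intro hiN hiM
    exact hiN.2 (Or.inl hiM)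
  -- Step 1: some assignment to N keeps all of M essential
  have hexc : ∃ c : Fin n → ZMod k, M ⊆ Ess (substSet f N c) := by
    by_contra h
    push_neg at h
    have hKN : Kills f M N := ⟨hNess, hNM, fun c => h c⟩
    obtain ⟨J₀, hJ₀Dis, hJ₀sub⟩ := exists_dis f M N.ncard N le_rfl hKN
    obtain ⟨x, hxβ, hxJ₀⟩ := hβ.1 J₀ hJ₀Dis
    exact (hJ₀sub hxJ₀).2 (Or.inr hxβ)
  obtain ⟨c, hMg⟩ := hexc
  set g : Fn k n := substSet f N c with hg
  -- Step 2: every x ∈ β is essential in g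
  have hβg : β ⊆ Ess g := by
    intro x hxβ
    by_contra hx
    obtain ⟨P, hPDis, hPβ⟩ := hβ.2 x hxβ
    have hxP : x ∈ P := by
      have : x ∈ P ∩ β := by rw [hPβ]; exact rfl
      exact this.1
    obtain ⟨⟨hPess, hPM, hPd⟩, -⟩ := hPDis
    have hxM : x ∉ M := fun hxM => by
      have : x ∈ P ∩ M := ⟨hxP, hxM⟩
      rw [hPM] at this
      exact this
    have hxN : x ∉ N := fun hxN => hxN.2 (Or.inr hxβ)
    have hPsub : P ⊆ N ∪ {x} := by
      intro p hp
      by_cases hpβ : p ∈ β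
      · have : p ∈ P ∩ β := ⟨hp, hpβ⟩
        rw [hPβ] at this
        exact Or.inr this
      · have hpM : p ∉ M := fun hpM => by
          have : p ∈ P ∩ M := ⟨hp, hpM⟩
          rw [hPM] at this
          exact this
        exact Or.inl ⟨hPess hp, fun hmem => by
          rcases hmem with h | h
          · exact hpM h
          · exact hpβ h⟩
    have hKNx : Kills f M (N ∪ {x}) := by
      refine kills_mono f M hPsub ?_ ?_ ⟨hPess, hPM, hPd⟩
      · intro i hi
        rcases hi with h | h
        · exact hNess h
        · rw [Set.mem_singleton_iff] at h
          exact h ▸ hPess hxP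
      · ext i
        simp only [Set.mem_inter_iff, Set.mem_empty_iff_false, iff_false, not_and]
        rintro (h | h) hiM
        · exact h.2 (Or.inl hiM)
        · rw [Set.mem_singleton_iff] at h
          exact hxM (h ▸ hiM)
    -- but substituting on N ∪ {x} with c gives back g, since x is inessential in g
    have hxne : ∀ a b, g (Function.update a x b) = g a := by
      intro a b
      by_contra hne
      exact hx ⟨a, b, hne⟩
    have heq : substSet f (N ∪ {x}) c = g := by
      funext a
      have h1 : substSet f (N ∪ {x}) c a = g (Function.update a x (c x)) := by
        show f _ = f _
        congr 1
        funext j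
        by_cases hjN : j ∈ N
        · have hjx : j ≠ x := fun h => hxN (h ▸ hjN)
          simp [hjN, hjx]
        · by_cases hjx : j = x
          · subst hjx
            simp [hjN]
          · simp [hjN, hjx, Function.update_of_ne hjx]
      rw [h1, hxne]
    exact hKNx.2.2 c (by rw [heq]; exact hMg)
  -- Step 3: Ess g = M ∪ β
  refine ⟨N, c, Set.Subset.antisymm ?_ ?_⟩
  · intro i hi
    have hiN : i ∉ N := fun hiN => not_ess_of_mem f N c hiN hi
    have hiEss : i ∈ Ess f := by
      have := essA f c (Set.empty_subset N) hiN hi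
      rwa [substSet_empty] at this
    by_contra hiMβ
    exact hiN ⟨hiEss, hiMβ⟩
  · intro i hi
    rcases hi with h | h
    · exact hMg h
    · exact hβg h
end

section
/- Let M be a non-empty inseparable set of essential variables of f and β an s-system of Dis(M,f). Then for every proper subset α ⊊ β, the set M ∪ α is not separable in f. -/
open scoped Classical

open Paper

private lemma agree_on_ess_aux {k n : ℕ} (h : Fn k n) :
    ∀ (D : Finset (Fin n)) (a b : Fin n → ZMod k),
      (∀ i, a i ≠ b i → i ∈ D) → (∀ i ∈ Ess h, a i = b i) → h a = h b := by
  intro D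
  induction D using Finset.induction_on with
  | empty =>
    intro a b hD _
    have : a = b := funext fun i => by
      by_contra hne
      exact absurd (hD i hne) (Finset.notMem_empty i)
    rw [this]
  | @insert j s hjs ih =>
    intro a b hD hEss
    have h1 : h a = h (Function.update a j (b j)) := by
      by_cases hje : j ∈ Ess h
      · have hab : a j = b j := hEss j hje
        rw [← hab, Function.update_eq_self]
      · rw [Ess, Set.mem_setOf_eq, Essential] at hje
        push_neg at hje
        exact (hje a (b j)).symm
    rw [h1]
    apply ih
    · intro i hi
      by_cases hij : i = j
      · exfalso; apply hi; rw [hij, Function.update_self]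
      · have : a i ≠ b i := by rwa [Function.update_of_ne hij] at hi
        have := hD i this
        rcases Finset.mem_insert.mp this with h' | h'
        · exact absurd h' hij
        · exact h'
    · intro i hi
      by_cases hij : i = j
      · rw [hij, Function.update_self]
      · rw [Function.update_of_ne hij]; exact hEss i hi

private lemma agree_on_ess {k n : ℕ} (h : Fn k n) (a b : Fin n → ZMod k)
    (hab : ∀ i ∈ Ess h, a i = b i) : h a = h b :=
  agree_on_ess_aux h Finset.univ a b (fun i _ => Finset.mem_univ i) hab

private lemma substSet_eq_self {k n : ℕ} (h : Fn k n) (S : Set (Fin n)) (c : Fin n → ZMod k)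
    (hS : ∀ i ∈ S, i ∉ Ess h) : substSet h S c = h := by
  funext a
  show h _ = h a
  apply agree_on_ess
  intro i hi
  exact if_neg (fun hiS => hS i hiS hi)

private lemma ess_substSet_subset {k n : ℕ} (h : Fn k n) (S : Set (Fin n)) (c : Fin n → ZMod k) :
    Ess (substSet h S c) ⊆ Ess h := by
  intro i hi
  by_contra hni
  obtain ⟨a, b, hab⟩ := hi
  apply hab
  show h _ = h _
  apply agree_on_ess
  intro j hj
  by_cases hjS : j ∈ S
  · simp [hjS]
  · have hji : j ≠ i := fun e => hni (e ▸ hj)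
    simp only [if_neg hjS]
    rw [Function.update_of_ne hji]

open Paper in
/-- if `M` is a non-empty inseparable set of essential variables of `f` and
`β` is an s-system of `Dis f M`, then for every proper subset `α ⊊ β` the set `M ∪ α`
is not separable in `f`. -/
theorem union_proper_subset_not_separable {k n : ℕ} (hk : 2 ≤ k) (f : Fn k n)
    (M β : Set (Fin n)) (hM : M ⊆ Ess f) (hMne : M.Nonempty)
    (hins : ¬ SeparableS f M) (hβ : IsSSystem (Dis f M) β) :
    ∀ α : Set (Fin n), α ⊂ β → ¬ SeparableS f (M ∪ α) := by
  intro α hα hsep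
  obtain ⟨J, c, hg⟩ := hsep
  set g := substSet f J c with hgdef
  obtain ⟨x, hxβ, hxα⟩ := Set.exists_of_ssubset hα
  obtain ⟨P, hPDis, hPβ⟩ := hβ.2 x hxβ
  obtain ⟨⟨hPess, hPM, hPkills⟩, _⟩ := hPDis
  -- P is disjoint from α
  have hPα : ∀ i ∈ P, i ∉ α := by
    intro i hiP hiα
    have hmem : i ∈ P ∩ β := ⟨hiP, hα.1 hiα⟩
    rw [hPβ, Set.mem_singleton_iff] at hmem
    exact hxα (hmem ▸ hiα)
  -- P is disjoint from Ess g = M ∪ α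
  have hPg : ∀ i ∈ P, i ∉ Ess g := by
    intro i hiP hi
    rw [hg] at hi
    cases hi with
    | inl h =>
      have : i ∈ P ∩ M := ⟨hiP, h⟩
      rw [hPM] at this
      exact this
    | inr h => exact hPα i hiP h
  -- P kills M under the assignment c
  obtain ⟨m, hmM, hm⟩ := Set.not_subset.mp (hPkills c)
  -- key equalities
  have e1 : substSet f (J ∪ P) c = substSet (substSet f P c) J c := by
    funext a
    simp only [substSet]
    congr 1
    funext i
    by_cases hiJ : i ∈ J <;> by_cases hiP : i ∈ P <;>
      simp [hiJ, hiP, Set.mem_union]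
  have e2 : substSet f (J ∪ P) c = substSet g P c := by
    funext a
    simp only [substSet, hgdef]
    congr 1
    funext i
    by_cases hiJ : i ∈ J <;> by_cases hiP : i ∈ P <;>
      simp [hiJ, hiP, Set.mem_union]
  have e3 : substSet g P c = g := substSet_eq_self g P c hPg
  have hmg : m ∈ Ess g := by rw [hg]; exact Or.inl hmM
  have : m ∈ Ess (substSet f P c) := by
    apply ess_substSet_subset (substSet f P c) J c
    rw [← e1, e2, e3]
    exact hmg
  exact hm this
end

section
/- Let f : Z_k^n → Z_k depend essentially on all n variables, and let g be a subfunction of f with ess(g) = m < n. Then there exists a variable x_t ∈ Ess(f) \ Ess(g) such that Ess(g) ∪ {x_t} is a separable set of f. -/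
open scoped Classical

namespace PaperAux

open Paper

variable {k n : ℕ}

lemma ess_substVar_subset (f : Fn k n) (i : Fin n) (c : ZMod k) :
    Ess (substVar f i c) ⊆ Ess f \ {i} := by
  intro j hj
  obtain ⟨a, b, hab⟩ := hj
  by_cases hji : j = i
  · exfalso
    subst hji
    apply hab
    simp [substVar, Function.update_idem]
  · refine ⟨⟨Function.update a i c, b, ?_⟩, hji⟩
    simpa [substVar, Function.update_comm hji] using hab

lemma substVar_of_not_essential (f : Fn k n) {t : Fin n} (ht : t ∉ Ess f) (d : ZMod k) :
    substVar f t d = f := by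
  funext a
  by_contra hne
  exact ht ⟨a, d, hne⟩

lemma substVar_comm (f : Fn k n) {i t : Fin n} (h : i ≠ t) (c d : ZMod k) :
    substVar (substVar f t d) i c = substVar (substVar f i c) t d := by
  funext a
  simp only [substVar]
  rw [Function.update_comm h]

lemma exists_val (f : Fn k n) {j t : Fin n} (hj : j ∈ Ess f) (hjt : j ≠ t) :
    ∃ d, j ∈ Ess (substVar f t d) := by
  obtain ⟨a, b, hab⟩ := hj
  refine ⟨a t, a, b, ?_⟩
  have h1 : Function.update (Function.update a j b) t (a t) = Function.update a j b := by
    conv_lhs => rw [show a t = Function.update a j b t by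
      rw [Function.update_of_ne (Ne.symm hjt)]]
    exact Function.update_eq_self _ _
  simpa [substVar, h1, Function.update_eq_self] using hab

lemma ess_sub {f g : Fn k n} (hg : g ∈ Sub f) : Ess g ⊆ Ess f := by
  induction hg with
  | refl => exact subset_rfl
  | tail _ hbc ih =>
    obtain ⟨i, _, cst, rfl⟩ := hbc
    exact ((ess_substVar_subset _ _ _).trans Set.diff_subset).trans ih

lemma key (N : ℕ) : ∀ (g h : Fn k n), (Ess h).ncard ≤ N → g ∈ Sub h → Ess g ⊂ Ess h →
    ∃ t, t ∉ Ess g ∧ ∃ h' ∈ Sub h, Ess h' = Ess g ∪ {t} := by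
  induction N with
  | zero =>
    intro g h hN hsub hss
    exfalso
    have : Ess h = ∅ := by
      rw [← Set.ncard_eq_zero (Set.toFinite _)]
      omega
    rw [this] at hss
    exact absurd hss.subset (by simpa using hss.ne)
  | succ N ih =>
    intro g h hN hsub hss
    rcases Relation.ReflTransGen.cases_head hsub with heq | ⟨h1, hstep, hsub1⟩
    · exact absurd (heq ▸ rfl) hss.ne
    obtain ⟨i, hi, c, rfl⟩ := hstep
    set h1 := substVar h i c with hh1
    have hmem1 : h1 ∈ Sub h := Relation.ReflTransGen.single ⟨i, hi, c, rfl⟩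
    have hEss1 : Ess h1 ⊆ Ess h \ {i} := ess_substVar_subset h i c
    have hss1 : Ess h1 ⊂ Ess h := by
      refine Set.ssubset_def.mpr ⟨hEss1.trans Set.diff_subset, fun hle => ?_⟩
      exact (hEss1 (hle hi)).2 rfl
    have hcard1 : (Ess h1).ncard < (Ess h).ncard :=
      Set.ncard_lt_ncard hss1 (Set.toFinite _)
    by_cases hgs : Ess g = Ess h1
    · by_cases hfullcase : Ess h ⊆ Ess g ∪ {i}
      · have hig : i ∉ Ess g := by
          intro hig
          rw [hgs] at hig
          exact (hEss1 hig).2 rfl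
        refine ⟨i, hig, h, Relation.ReflTransGen.refl, ?_⟩
        refine subset_antisymm hfullcase ?_
        rintro x (hx | hx)
        · exact hss.subset hx
        · rw [Set.mem_singleton_iff.mp hx]; exact hi
      · obtain ⟨t, htE, htg⟩ := Set.not_subset.mp hfullcase
        have htg' : t ∉ Ess g := fun hh => htg (Or.inl hh)
        have hit : i ≠ t := fun hh => htg (Or.inr (by simp [hh]))
        obtain ⟨d, hid⟩ := exists_val h hi hit
        set h' := substVar h t d with hh'
        have hmem' : h' ∈ Sub h := Relation.ReflTransGen.single ⟨t, htE, d, rfl⟩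
        have heq1 : substVar h' i c = h1 := by
          rw [hh', substVar_comm h hit, ← hh1]
          exact substVar_of_not_essential h1 (hgs ▸ htg') d
        have hmem1' : h1 ∈ Sub h' :=
          Relation.ReflTransGen.single ⟨i, hid, c, heq1.symm⟩
        have hgsub' : g ∈ Sub h' := hmem1'.trans hsub1
        have hEssle : Ess g ⊆ Ess h' := by
          rw [hgs, ← heq1]
          exact (ess_substVar_subset h' i c).trans Set.diff_subset
        have hig' : i ∉ Ess g := by
          rw [hgs, ← heq1]
          exact fun hh => (ess_substVar_subset h' i c hh).2 rfl
        have hss' : Ess g ⊂ Ess h' :=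
          Set.ssubset_def.mpr ⟨hEssle, fun hle => hig' (hle hid)⟩
        have hEssh' : Ess h' ⊆ Ess h \ {t} := ess_substVar_subset h t d
        have hssh' : Ess h' ⊂ Ess h := by
          refine Set.ssubset_def.mpr ⟨hEssh'.trans Set.diff_subset, fun hle => ?_⟩
          exact (hEssh' (hle htE)).2 rfl
        have hcard' : (Ess h').ncard ≤ N := by
          have := Set.ncard_lt_ncard hssh' (Set.toFinite _)
          omega
        obtain ⟨t', ht', h'', hh'', hE⟩ := ih g h' hcard' hgsub' hss'
        exact ⟨t', ht', h'', hmem'.trans hh'', hE⟩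
    · have hssg1 : Ess g ⊂ Ess h1 :=
        Set.ssubset_def.mpr ⟨ess_sub hsub1, fun hle => hgs (subset_antisymm (ess_sub hsub1) hle)⟩
      obtain ⟨t, ht, h', hh', hE⟩ := ih g h1 (by omega) hsub1 hssg1
      exact ⟨t, ht, h', hmem1.trans hh', hE⟩

end PaperAux

open Paper in
/-- if `f` depends essentially on all `n` variables and `g` is a subfunction
of `f` with fewer than `n` essential variables, then some variable `x t` essential in `f`
but not in `g` makes `Ess g ∪ {t}` separable in `f`. -/
theorem extend_subfunction_separable {k n : ℕ} (hk : 2 ≤ k) (f g : Fn k n)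
    (hfull : Ess f = Set.univ) (hg : g ∈ Sub f) (m : ℕ)
    (hm : (Ess g).ncard = m) (hlt : m < n) :
    ∃ t : Fin n, t ∈ Ess f ∧ t ∉ Ess g ∧ Separable f (Ess g ∪ {t}) := by
  have hss : Ess g ⊂ Ess f := by
    rw [hfull]
    refine Set.ssubset_def.mpr ⟨Set.subset_univ _, fun hle => ?_⟩
    have : (Ess g).ncard = n := by
      rw [subset_antisymm (Set.subset_univ _) hle]
      simp [Set.ncard_univ]
    omega
  obtain ⟨t, ht, h', hh', hE⟩ := PaperAux.key (Ess f).ncard g f le_rfl hg hss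
  exact ⟨t, by simp [hfull], ht, h', hh', hE⟩
end

section
/- Let f : Z_k^n → Z_k depend essentially on all n variables and let g be a subfunction of f with ess(g) = m ≤ n. Then there exist subfunctions g_1, ..., g_{n-m} of f with g ≺ g_1 ≺ g_2 ≺ ... ≺ g_{n-m} = f and ess(g_i) = m + i for each i = 1, ..., n-m. -/
open scoped Classical

section Aux

open Paper

variable {k n : ℕ}

lemma not_essential_iff {f : Fn k n} {i : Fin n} :
    i ∉ Ess f ↔ ∀ a b, f (Function.update a i b) = f a := by
  simp [Ess, Essential, Set.mem_setOf_eq]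

lemma ess_substVar_subset (f : Fn k n) (i : Fin n) (c : ZMod k) :
    Ess (substVar f i c) ⊆ Ess f \ {i} := by
  intro l hl
  obtain ⟨a, b, hab⟩ := hl
  by_cases hli : l = i
  · subst hli
    exact absurd (by simp [substVar, Function.update_idem]) hab
  · refine ⟨⟨Function.update a i c, b, ?_⟩, hli⟩
    simpa [substVar, Function.update_comm hli] using hab

lemma substVar_eq_self {f : Fn k n} {i : Fin n} (h : i ∉ Ess f) (c : ZMod k) :
    substVar f i c = f := by
  funext a
  exact not_essential_iff.1 h a c

lemma ess_subset_of_simple {g f : Fn k n} (h : SimpleSub g f) : Ess g ⊆ Ess f := by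
  obtain ⟨i, hi, c, rfl⟩ := h
  exact (ess_substVar_subset f i c).trans (Set.diff_subset)

lemma ess_subset_of_sub {g f : Fn k n} (h : g ∈ Sub f) : Ess g ⊆ Ess f := by
  induction h with
  | refl => exact subset_rfl
  | tail _ hstep ih => exact (ess_subset_of_simple hstep).trans ih

lemma ncard_lt_of_simple {g f : Fn k n} (h : SimpleSub g f) :
    (Ess g).ncard < (Ess f).ncard := by
  obtain ⟨i, hi, c, rfl⟩ := h
  refine Set.ncard_lt_ncard ?_ (Set.toFinite _)
  refine lt_of_le_of_lt (ess_substVar_subset f i c) ?_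
  exact Set.sdiff_singleton_ssubset.mpr hi

lemma exists_d {f : Fn k n} {i j : Fin n} (hij : i ≠ j) (hi : i ∈ Ess f) :
    ∃ d, i ∈ Ess (substVar f j d) := by
  obtain ⟨a, b, hab⟩ := hi
  refine ⟨a j, a, b, ?_⟩
  have h1 : Function.update (Function.update a i b) j (a j)
      = Function.update a i b := by
    have : (Function.update a i b) j = a j := Function.update_of_ne hij.symm b a
    conv_lhs => rw [← this]
    exact Function.update_eq_self j _
  have h2 : Function.update a j (a j) = a := Function.update_eq_self j a
  simpa [substVar, h1, h2] using hab

lemma substVar_substVar {f : Fn k n} {i j : Fin n} (hij : i ≠ j) {c d : ZMod k}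
    (hjg : j ∉ Ess (substVar f i c)) :
    substVar (substVar f j d) i c = substVar f i c := by
  funext a
  have h := not_essential_iff.1 hjg a d
  -- h : f (update (update a j d) i c) = f (update a i c)
  simp only [substVar] at h ⊢
  rw [Function.update_comm hij] 
  exact h

/-- Repair lemma: from any first step we get a simple subfunction of codimension one
still containing `g` among its subfunctions. -/
lemma exists_top (f g : Fn k n) : ∀ r : ℕ, ∀ h1 : Fn k n, SimpleSub h1 f → g ∈ Sub h1 →
    (Ess f).ncard - (Ess h1).ncard ≤ r + 1 →
    ∃ h, SimpleSub h f ∧ (Ess h).ncard = (Ess f).ncard - 1 ∧ g ∈ Sub h := by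
  intro r
  induction r with
  | zero =>
    intro h1 hs hgsub hgap
    have hlt := ncard_lt_of_simple hs
    refine ⟨h1, hs, by omega, hgsub⟩
  | succ r ih =>
    intro h1 hs hgsub hgap
    by_cases hsmall : (Ess f).ncard - (Ess h1).ncard ≤ r + 1
    · exact ih h1 hs hgsub hsmall
    · have hlt := ncard_lt_of_simple hs
      obtain ⟨i, hi, c, rfl⟩ := hs
      -- find j ∈ Ess f outside Ess h1 ∪ {i}
      have hsub : insert i (Ess (substVar f i c)) ⊆ Ess f := by
        refine Set.insert_subset hi ((ess_substVar_subset f i c).trans Set.diff_subset)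
      have hinotmem : i ∉ Ess (substVar f i c) := fun hmem =>
        ((ess_substVar_subset f i c) hmem).2 rfl
      have hcard : (insert i (Ess (substVar f i c))).ncard
          = (Ess (substVar f i c)).ncard + 1 :=
        Set.ncard_insert_of_notMem hinotmem (Set.toFinite _)
      have hlt2 : (insert i (Ess (substVar f i c))).ncard < (Ess f).ncard := by omega
      have hss : insert i (Ess (substVar f i c)) ⊂ Ess f :=
        ⟨hsub, fun hle => absurd (Set.ncard_le_ncard hle (Set.toFinite _)) (by omega)⟩
      obtain ⟨j, hjf, hjnot⟩ := Set.exists_of_ssubset hss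
      have hij : i ≠ j := fun h => hjnot (h ▸ Set.mem_insert i _)
      have hjness : j ∉ Ess (substVar f i c) := fun h => hjnot (Set.mem_insert_of_mem _ h)
      obtain ⟨d, hid⟩ := exists_d hij hi
      set h : Fn k n := substVar f j d with hh
      have heq : substVar h i c = substVar f i c := substVar_substVar hij hjness
      have hsimple2 : SimpleSub (substVar f i c) h := ⟨i, hid, c, heq.symm⟩
      have hgsub2 : g ∈ Sub h := Relation.ReflTransGen.head hsimple2 hgsub
      have hsimpleh : SimpleSub h f := ⟨j, hjf, d, rfl⟩
      have hmono : insert i (Ess (substVar f i c)) ⊆ Ess h := by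
        refine Set.insert_subset hid ?_
        rw [← heq]
        exact ess_subset_of_simple ⟨i, hid, c, rfl⟩
      have hge : (Ess (substVar f i c)).ncard + 1 ≤ (Ess h).ncard := by
        rw [← hcard]; exact Set.ncard_le_ncard hmono (Set.toFinite _)
      have hlth := ncard_lt_of_simple hsimpleh
      exact ih h hsimpleh hgsub2 (by omega)

lemma main_chain : ∀ T : ℕ, ∀ f g : Fn k n, g ∈ Sub f →
    (Ess f).ncard - (Ess g).ncard = T → (Ess g).ncard ≤ (Ess f).ncard →
    ∃ h : ℕ → Fn k n, h 0 = g ∧ h T = f ∧ (∀ i < T, SimpleSub (h i) (h (i + 1))) ∧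
      (∀ i ≤ T, (Ess (h i)).ncard = (Ess g).ncard + i) := by
  intro T
  induction T with
  | zero =>
    intro f g hg hT hle
    rcases Relation.ReflTransGen.cases_head hg with heq | ⟨h1, hs, htail⟩
    · refine ⟨fun _ => g, rfl, heq.symm, by omega, ?_⟩
      intro i hi
      interval_cases i
      simp
    · exfalso
      have h1lt := ncard_lt_of_simple hs
      have hgle : (Ess g).ncard ≤ (Ess h1).ncard :=
        Set.ncard_le_ncard (ess_subset_of_sub htail) (Set.toFinite _)
      omega
  | succ T ih =>
    intro f g hg hT hle
    rcases Relation.ReflTransGen.cases_head hg with heq | ⟨h1, hs, htail⟩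
    · exfalso; rw [← heq] at hT; omega
    · have h1lt := ncard_lt_of_simple hs
      have hgle : (Ess g).ncard ≤ (Ess h1).ncard :=
        Set.ncard_le_ncard (ess_subset_of_sub htail) (Set.toFinite _)
      obtain ⟨h', hsh', hcard', hgsub'⟩ := exists_top f g T h1 hs htail (by omega)
      have hglehp : (Ess g).ncard ≤ (Ess h').ncard :=
        Set.ncard_le_ncard (ess_subset_of_sub hgsub') (Set.toFinite _)
      obtain ⟨ch, hch0, hchT, hchstep, hchcard⟩ :=
        ih h' g hgsub' (by omega) hglehp
      refine ⟨fun i => if i ≤ T then ch i else f, by simp [hch0], by simp, ?_, ?_⟩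
      · intro i hi
        by_cases hiT : i < T
        · have h2 : i + 1 ≤ T := hiT
          simpa [Nat.le_of_lt hiT, h2] using hchstep i hiT
        · have hieq : i = T := by omega
          subst hieq
          have hne : ¬ (i + 1 ≤ i) := by omega
          simp only [le_refl, if_true, hne, if_false]
          rw [hchT]
          exact hsh'
      · intro i hi
        by_cases hiT : i ≤ T
        · simpa [hiT] using hchcard i hiT
        · have hieq : i = T + 1 := by omega
          subst hieq
          have hne : ¬ (T + 1 ≤ T) := by omega
          simp only [hne, if_false]
          omega

end Aux

open Paper in
/-- if `f` depends essentially on all `n` variables and `g ⪯ f` has `m ≤ n`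
essential variables, then there is a chain `g ≺ g₁ ≺ ⋯ ≺ g_{n-m} = f` of simple
subfunctions with `ess (g_i) = m + i`. -/
theorem chain_of_subfunctions {k n : ℕ} (hk : 2 ≤ k) (f g : Fn k n)
    (hfull : Ess f = Set.univ) (hg : g ∈ Sub f) (m : ℕ)
    (hm : (Ess g).ncard = m) (hle : m ≤ n) :
    ∃ h : ℕ → Fn k n, h 0 = g ∧ h (n - m) = f ∧
      (∀ i < n - m, SimpleSub (h i) (h (i + 1))) ∧
      (∀ i ≤ n - m, (Ess (h i)).ncard = m + i) := by
  have hn : (Ess f).ncard = n := by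
    rw [hfull, Set.ncard_univ, Nat.card_eq_fintype_card, Fintype.card_fin]
  obtain ⟨h, h0, hT, hstep, hcard⟩ :=
    main_chain (n - m) f g hg (by omega) (by omega)
  exact ⟨h, h0, hT, hstep, fun i hi => by rw [hcard i hi, hm]⟩
end

section
/- For a Boolean function f : Z_2^n → Z_2, the number imp(f) of implementations of f satisfies the recursion: imp(f) = 1 if ess(f) = 0; imp(f) = 2 if ess(f) = 1; and imp(f) = Σ_{x ∈ Ess(f)} [imp(f(x=0)) + imp(f(x=1))] if ess(f) ≥ 2. -/
open scoped Classical

namespace Aux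
open Paper

lemma not_ess {k n : ℕ} {f : Fn k n} {i : Fin n} (h : i ∉ Ess f) :
    ∀ a b, f (Function.update a i b) = f a := by
  simp only [Ess, Essential, Set.mem_setOf_eq, not_exists, not_not] at h
  exact h

lemma ess_substVar {k n : ℕ} (f : Fn k n) (i : Fin n) (c : ZMod k) :
    Ess (substVar f i c) ⊆ Ess f \ {i} := by
  intro j hj
  obtain ⟨a, b, hab⟩ := hj
  have hji : j ≠ i := by
    rintro rfl
    apply hab
    simp [substVar, Function.update_idem]
  refine ⟨⟨Function.update a i c, b, ?_⟩, hji⟩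
  have e1 : substVar f i c (Function.update a j b)
      = f (Function.update (Function.update a i c) j b) := by
    simp [substVar, Function.update_comm hji]
  have e2 : substVar f i c a = f (Function.update a i c) := rfl
  rw [e1, e2] at hab
  exact hab

lemma const_of_ess_empty {k n : ℕ} {f : Fn k n} (h : Ess f = ∅) (a b : Fin n → ZMod k) :
    f a = f b := by
  have key : ∀ s : Finset (Fin n), f (fun i => if i ∈ s then b i else a i) = f a := by
    intro s
    induction s using Finset.induction with
    | empty => simp
    | @insert j s hj ih =>
      have : (fun i => if i ∈ insert j s then b i else a i)
          = Function.update (fun i => if i ∈ s then b i else a i) j (b j) := by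
        funext i
        by_cases hij : i = j
        · subst hij; simp [Function.update]
        · simp [Function.update, hij, hj]
      rw [this]
      rw [not_ess (f := f) (i := j) (by simp [h]) _ (b j), ih]
  have := key Finset.univ
  simp at this
  rw [this]

lemma nonconst_of_ess_nonempty {k n : ℕ} {f : Fn k n} (h : (Ess f).Nonempty) (c : ZMod k) :
    ¬ ∀ a, f a = c := by
  obtain ⟨i, a, b, hab⟩ := h
  intro hc
  exact hab (by rw [hc, hc])

lemma imp_set_of_ess_empty {k n : ℕ} [NeZero k] {f : Fn k n} (h : Ess f = ∅) :
    {p : List (Fin n × ZMod k) × ZMod k | IsImp f p.1 p.2}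
      = {(([] : List (Fin n × ZMod k)), f (fun _ => 0))} := by
  ext ⟨l, c⟩
  constructor
  · rintro hl
    cases hl with
    | const _ _ hc => simp [hc (fun _ => 0)]
    | step _ i a l c hi _ => rw [h] at hi; exact absurd hi (Set.notMem_empty i)
  · rintro hmem
    simp only [Set.mem_singleton_iff, Prod.mk.injEq] at hmem
    obtain ⟨rfl, rfl⟩ := hmem
    exact IsImp.const _ _ (fun a => const_of_ess_empty h a _)

lemma imp_of_ess_empty {k n : ℕ} [NeZero k] {f : Fn k n} (h : Ess f = ∅) : imp f = 1 := by
  rw [imp, imp_set_of_ess_empty h, Set.ncard_singleton]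

/-- The decomposition family. -/
noncomputable def T {k n : ℕ} (f : Fn k n) (q : Fin n × ZMod k) :
    Set (List (Fin n × ZMod k) × ZMod k) :=
  if q.1 ∈ Ess f then
    (fun p : List (Fin n × ZMod k) × ZMod k => (q :: p.1, p.2)) ''
      {p | IsImp (substVar f q.1 q.2) p.1 p.2}
  else ∅

lemma imp_set_decomp {k n : ℕ} {f : Fn k n} (h : (Ess f).Nonempty) :
    {p : List (Fin n × ZMod k) × ZMod k | IsImp f p.1 p.2} = ⋃ q, T f q := by
  ext ⟨l, c⟩
  constructor
  · rintro hl
    cases hl with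
    | const _ _ hc => exact absurd hc (nonconst_of_ess_nonempty h _)
    | step _ i a l c hi hl' =>
      exact Set.mem_iUnion.2 ⟨(i, a), by simp only [T, hi, if_pos]; exact ⟨(l, c), hl', rfl⟩⟩
  · intro hl
    obtain ⟨q, hq⟩ := Set.mem_iUnion.1 hl
    by_cases hq1 : q.1 ∈ Ess f
    · simp only [T, hq1, if_pos] at hq
      obtain ⟨⟨l', c'⟩, hl', heq⟩ := hq
      obtain ⟨h1, h2⟩ := Prod.mk.injEq .. ▸ heq
      subst h1; subst h2
      exact IsImp.step _ _ _ _ _ hq1 hl'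
    · simp [T, hq1] at hq

lemma T_disjoint {k n : ℕ} (f : Fn k n) :
    Pairwise (Function.onFun Disjoint (T f)) := by
  intro q q' hne
  show Disjoint (T f q) (T f q')
  rw [Set.disjoint_left]
  intro p hp hp'
  by_cases h1 : q.1 ∈ Ess f
  · by_cases h2 : q'.1 ∈ Ess f
    · simp only [T, h1, h2, if_pos] at hp hp'
      obtain ⟨x, _, hx⟩ := hp
      obtain ⟨y, _, hy⟩ := hp'
      have hfst := congrArg Prod.fst (hx.trans hy.symm)
      simp only [List.cons.injEq] at hfst
      exact hne hfst.1
    · simp [T, h2] at hp'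
  · simp [T, h1] at hp

lemma cons_inj {k n : ℕ} (q : Fin n × ZMod k) :
    Function.Injective (fun p : List (Fin n × ZMod k) × ZMod k => (q :: p.1, p.2)) := by
  rintro ⟨l, c⟩ ⟨l', c'⟩ h
  simp only [Prod.mk.injEq, List.cons.injEq] at h
  exact Prod.ext h.1.2 h.2

lemma ncard_biUnion {ι α : Type*} (s : Finset ι) (S : ι → Set α)
    (hfin : ∀ i, (S i).Finite) (hd : Pairwise (Function.onFun Disjoint S)) :
    (⋃ i ∈ s, S i).ncard = ∑ i ∈ s, (S i).ncard := by
  induction s using Finset.induction with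
  | empty => simp
  | @insert a s ha ih =>
    have hf2 : (⋃ i ∈ s, S i).Finite := Set.Finite.biUnion s.finite_toSet fun i _ => hfin i
    rw [Finset.sum_insert ha, Finset.set_biUnion_insert, Set.ncard_union_eq ?_ (hfin a) hf2, ih]
    rw [Set.disjoint_iUnion_right]
    intro i
    rw [Set.disjoint_iUnion_right]
    intro hi
    exact hd (fun h => ha (h ▸ hi))

lemma ess_ncard_lt {k n : ℕ} {f : Fn k n} {i : Fin n} (hi : i ∈ Ess f) (c : ZMod k) :
    (Ess (substVar f i c)).ncard < (Ess f).ncard := by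
  apply Set.ncard_lt_ncard _ (Set.toFinite _)
  constructor
  · exact (ess_substVar f i c).trans Set.diff_subset
  · intro hsub
    exact ((ess_substVar f i c) (hsub hi)).2 rfl

lemma imp_finite {k n : ℕ} [NeZero k] (f : Fn k n) :
    {p : List (Fin n × ZMod k) × ZMod k | IsImp f p.1 p.2}.Finite := by
  generalize hm : (Ess f).ncard = m
  induction m using Nat.strong_induction_on generalizing f with
  | _ m ih =>
    rcases Set.eq_empty_or_nonempty (Ess f) with h | h
    · rw [imp_set_of_ess_empty h]; exact Set.finite_singleton _
    · rw [imp_set_decomp h]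
      apply Set.finite_iUnion
      intro q
      unfold T
      split
      · next hq =>
        exact Set.Finite.image _ (ih _ (hm ▸ ess_ncard_lt hq q.2) _ rfl)
      · exact Set.finite_empty

lemma imp_formula {k n : ℕ} [NeZero k] {f : Fn k n} (h : (Ess f).Nonempty) :
    imp f = ∑ q : Fin n × ZMod k, if q.1 ∈ Ess f then imp (substVar f q.1 q.2) else 0 := by
  have hfin : ∀ q : Fin n × ZMod k, (T f q).Finite := by
    intro q
    unfold T; split
    · exact Set.Finite.image _ (imp_finite _)
    · exact Set.finite_empty
  rw [imp, imp_set_decomp h,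
    show (⋃ q, T f q) = ⋃ q ∈ Finset.univ, T f q by simp,
    ncard_biUnion _ _ hfin (T_disjoint f)]
  apply Finset.sum_congr rfl
  intro q _
  unfold T
  split
  · next hq => rw [Set.ncard_image_of_injective _ (cons_inj q)]; rfl
  · exact Set.ncard_empty _

end Aux

namespace Aux
open Paper

lemma sum_zmod2 (g : ZMod 2 → ℕ) : ∑ a : ZMod 2, g a = g 0 + g 1 := by
  rw [show (Finset.univ : Finset (ZMod 2)) = {0, 1} by decide,
    Finset.sum_insert (by decide), Finset.sum_singleton]

end Aux

open Paper in
/-- recursion for the number of implementations of a Boolean function: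
`imp f = 1` if `ess f = 0`, `imp f = 2` if `ess f = 1`, and
`imp f = Σ_{x ∈ Ess f} (imp f(x=0) + imp f(x=1))` if `ess f ≥ 2`. -/
theorem imp_recursion {n : ℕ} (f : Fn 2 n) :
    ((Ess f).ncard = 0 → imp f = 1) ∧
    ((Ess f).ncard = 1 → imp f = 2) ∧
    (2 ≤ (Ess f).ncard →
      imp f = ∑ i : Fin n,
        if i ∈ Ess f then imp (substVar f i 0) + imp (substVar f i 1) else 0) := by
  refine ⟨?_, ?_, ?_⟩
  · intro h0
    exact Aux.imp_of_ess_empty ((Set.ncard_eq_zero (Set.toFinite _)).mp h0)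
  · intro h1
    obtain ⟨i, hi⟩ := Set.ncard_eq_one.mp h1
    have hif : i ∈ Ess f := hi ▸ rfl
    have hone : ∀ c : ZMod 2, imp (substVar f i c) = 1 := by
      intro c
      apply Aux.imp_of_ess_empty
      have h2 := (Aux.ess_substVar f i c).trans (by rw [hi] : Ess f \ {i} ⊆ ({i} : Set (Fin n)) \ {i})
      simpa using Set.subset_empty_iff.mp (by simpa using h2)
    rw [Aux.imp_formula ⟨i, hif⟩, Fintype.sum_prod_type]
    rw [Finset.sum_eq_single i]
    · simp [hif, hone, Aux.sum_zmod2]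
    · intro j _ hj
      have : j ∉ Ess f := by rw [hi]; simpa using hj
      simp [this]
    · simp
  · intro h2
    have hne : (Ess f).Nonempty := Set.nonempty_of_ncard_ne_zero (by omega)
    rw [Aux.imp_formula hne, Fintype.sum_prod_type]
    apply Finset.sum_congr rfl
    intro i _
    by_cases hi : i ∈ Ess f
    · simp only [hi, if_pos]
      exact Aux.sum_zmod2 (fun a => imp (substVar f i a))
    · simp [hi]
end

section
/- Let σ : Z_k → Z_k and define the transformation ψ_σ on k-valued functions by (ψ_σ f)(a) = σ(f(a)) for all a ∈ Z_k^n. Then for all f ∈ P_k^n, f and ψ_σ(f) have the same sets of essential variables and the same separable sets (indeed sub_m(f) = sub_m(ψ_σ f) for all m) if and only if σ is a permutation of Z_k (k > 2, n ≥ 1). -/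
open scoped Classical

section Aux
open Paper

variable {k n : ℕ} {σ : ZMod k → ZMod k}

lemma ess_comp (hσ : Function.Injective σ) (f : Fn k n) :
    Ess (fun a => σ (f a)) = Ess f := by
  ext i
  simp only [Ess, Essential, Set.mem_setOf_eq]
  constructor
  · rintro ⟨a, b, h⟩; exact ⟨a, b, fun he => h (congrArg σ he)⟩
  · rintro ⟨a, b, h⟩; exact ⟨a, b, fun he => h (hσ he)⟩

lemma sub_comp (hσ : Function.Injective σ) {f g : Fn k n} (h : g ∈ Sub f) :
    (fun a => σ (g a)) ∈ Sub (fun a => σ (f a)) := by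
  induction h with
  | refl => exact Relation.ReflTransGen.refl
  | tail _ hstep ih =>
      obtain ⟨i, hi, c, hc⟩ := hstep
      refine Relation.ReflTransGen.tail ih ⟨i, ?_, c, ?_⟩
      · rwa [ess_comp hσ]
      · subst hc; rfl

lemma sub_comp_rev (hσ : Function.Injective σ) {f h : Fn k n}
    (hh : h ∈ Sub (fun a => σ (f a))) :
    ∃ g ∈ Sub f, h = fun a => σ (g a) := by
  induction hh with
  | refl => exact ⟨f, Relation.ReflTransGen.refl, rfl⟩
  | tail _ hstep ih =>
      obtain ⟨g, hg, rfl⟩ := ih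
      obtain ⟨i, hi, c, hc⟩ := hstep
      rw [ess_comp hσ] at hi
      refine ⟨substVar g i c, Relation.ReflTransGen.tail hg ⟨i, hi, c, rfl⟩, ?_⟩
      subst hc; rfl

end Aux

open Paper in
/-- the range transformation `ψ_σ : f ↦ σ ∘ f` preserves essential
variables, separable sets and the numbers of subfunctions with `m` essential variables
for every `f ∈ P_k^n` if and only if `σ` is a permutation of `Z_k` (`k > 2`, `n ≥ 1`). -/
theorem range_transformation_iff_permutation {k n : ℕ} (hk : 2 < k) (hn : 1 ≤ n)
    (σ : ZMod k → ZMod k) :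
    (∀ f : Fn k n,
        Ess (fun a => σ (f a)) = Ess f ∧
        (∀ M : Set (Fin n), Separable f M ↔ Separable (fun a => σ (f a)) M) ∧
        (∀ m : ℕ, subCount f m = subCount (fun a => σ (f a)) m)) ↔
      Function.Bijective σ := by
  haveI : NeZero k := ⟨by omega⟩
  haveI : Fact (1 < k) := ⟨by omega⟩
  constructor
  · intro H
    rw [← Finite.injective_iff_bijective]
    by_contra hinj
    rw [Function.Injective] at hinj
    push_neg at hinj
    obtain ⟨a, b, hab, hne⟩ := hinj
    set i : Fin n := ⟨0, hn⟩
    set f : Fn k n := fun x => if x i = 0 then a else b with hf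
    have hconst : ∀ x, σ (f x) = σ a := by
      intro x
      by_cases hx : x i = 0 <;> simp [hf, hx, hab]
    have h1 : i ∈ Ess f := by
      refine ⟨fun _ => 0, 1, ?_⟩
      have : Function.update (fun _ => (0 : ZMod k)) i 1 i = 1 := by simp
      simp only [hf, this]
      simp only [one_ne_zero, if_false, if_pos rfl]
      exact Ne.symm hne
    rw [← (H f).1] at h1
    obtain ⟨x, c, hxc⟩ := h1
    exact hxc ((hconst _).trans (hconst x).symm)
  · intro hσ f
    have hinj := hσ.injective
    have hcompinj : Function.Injective (fun (g : Fn k n) => (fun a => σ (g a))) := by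
      intro g g' h
      funext a
      exact hinj (congrFun h a)
    refine ⟨ess_comp hinj f, ?_, ?_⟩
    · intro M
      constructor
      · rintro ⟨g, hg, hEss⟩
        exact ⟨fun a => σ (g a), sub_comp hinj hg, by rw [ess_comp hinj g, hEss]⟩
      · rintro ⟨h, hh, hEss⟩
        obtain ⟨g, hg, rfl⟩ := sub_comp_rev hinj hh
        exact ⟨g, hg, by rwa [ess_comp hinj g] at hEss⟩
    · intro m
      unfold subCount
      have hset : {g | g ∈ Sub (fun a => σ (f a)) ∧ (Ess g).ncard = m} =
          (fun (g : Fn k n) => (fun a => σ (g a))) '' {g | g ∈ Sub f ∧ (Ess g).ncard = m} := by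
        ext h
        constructor
        · rintro ⟨hh, hm⟩
          obtain ⟨g, hg, rfl⟩ := sub_comp_rev hinj hh
          exact ⟨g, ⟨hg, by rwa [ess_comp hinj g] at hm⟩, rfl⟩
        · rintro ⟨g, ⟨hg, hm⟩, rfl⟩
          exact ⟨sub_comp hinj hg, by rwa [ess_comp hinj g]⟩
      rw [show {g ∈ Sub (fun a => σ (f a)) | (Ess g).ncard = m} = _ from hset,
        Set.ncard_image_of_injective _ hcompinj]
end
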